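/- Let N ∈ ℝ^{d×d} be symmetric positive definite and P ∈ ℝ^{d×d} symmetric positive semi-definite, and suppose N P N = P. Then N acts as the identity on the column space of P: for every vector v in the range of P, N v = v. -/

import Mathlib

open Matrix
open scoped MatrixOrder

section Aux
variable {n : Type*} [Fintype n] [DecidableEq n]

lemma aux_trace_nonneg {S : Matrix n n ℝ} (hS : S.PosSemidef) : 0 ≤ S.trace := by
  rw [Matrix.trace]
  apply Finset.sum_nonneg
  intro i _
  have := hS.dotProduct_mulVec_nonneg (Pi.single i 1)
  simpa [Matrix.mulVec, dotProduct, Pi.single_apply] using this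

lemma aux_eq_zero_of_trace_eq_zero {S : Matrix n n ℝ} (hS : S.PosSemidef)
    (ht : S.trace = 0) : S = 0 := by
  have hB : (CFC.sqrt S) * (CFC.sqrt S) = S := CFC.sqrt_mul_sqrt_self S hS.nonneg
  have hBH : (CFC.sqrt S).conjTranspose = (CFC.sqrt S) := (CFC.sqrt_nonneg S).posSemidef.isHermitian
  have hzero : (CFC.sqrt S) = 0 := by
    have htr : Matrix.trace ((CFC.sqrt S).conjTranspose * (CFC.sqrt S)) = 0 := by
      rw [hBH, hB, ht]
    have hsum : ∑ j, ∑ k, ((CFC.sqrt S) k j) * ((CFC.sqrt S) k j) = 0 := by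
      simpa [Matrix.trace, Matrix.mul_apply, Matrix.conjTranspose_apply,
        Matrix.diag] using htr
    have hall : ∀ j ∈ Finset.univ, ∑ k, ((CFC.sqrt S) k j) * ((CFC.sqrt S) k j) = 0 := by
      have h1 : ∀ j ∈ (Finset.univ : Finset n), 0 ≤ ∑ k, ((CFC.sqrt S) k j) * ((CFC.sqrt S) k j) :=
        fun j _ => Finset.sum_nonneg fun k _ => mul_self_nonneg _
      exact (Finset.sum_eq_zero_iff_of_nonneg h1).mp hsum
    ext k j
    have h2 := (Finset.sum_eq_zero_iff_of_nonneg
      (fun k (_ : k ∈ Finset.univ) => mul_self_nonneg ((CFC.sqrt S) k j))).mp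
      (hall j (Finset.mem_univ j)) k (Finset.mem_univ k)
    simpa using mul_self_eq_zero.mp h2
  rw [← hB, hzero, Matrix.mul_zero]

end Aux

set_option maxHeartbeats 1000000 in
theorem fisher_hmc_identity_on_range
    (d : ℕ) (N P : Matrix (Fin d) (Fin d) ℝ)
    (hN : N.PosDef) (hP : P.PosSemidef) (h : N * P * N = P) :
    ∀ w : Fin d → ℝ, N.mulVec (P.mulVec w) = P.mulVec w := by
  set A := N - 1 with hA
  have hNsym : N.conjTranspose = N := hN.isHermitian
  have hPsym : P.conjTranspose = P := hP.isHermitian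
  have hAsym : A.conjTranspose = A := by
    rw [hA, Matrix.conjTranspose_sub, hNsym, Matrix.conjTranspose_one]
  -- key identities
  have k1 : N * P * A = -(A * P) := by
    have : N * P * A = N * P * N - N * P := by rw [hA]; noncomm_ring
    rw [this, h, hA]; noncomm_ring
  have k2 : A * P * N = -(P * A) := by
    have : A * P * N = N * P * N - P * N := by rw [hA]; noncomm_ring
    rw [this, h, hA]; noncomm_ring
  -- S := A * P * A is PSD and equals -(A*P + P*A)
  set S := A * P * A with hS
  have hSpsd : S.PosSemidef := by
    have := hP.mul_mul_conjTranspose_same A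
    rwa [hAsym] at this
  have hSeq : S = -(A * P + P * A) := by
    have : S = N * P * A - P * A := by rw [hS, hA]; noncomm_ring
    rw [this, k1]; noncomm_ring
  -- trace S = -2 tr(A*P) ; trace (N*S) = 2 tr(A*P)
  have htrS : S.trace = -(2 * (A * P).trace) := by
    rw [hSeq]
    simp [Matrix.trace_add, Matrix.trace_neg, Matrix.trace_mul_comm P A]
    ring
  have htrNS : (N * S).trace = 2 * (A * P).trace := by
    have e1 : N * S = -(N * A * P) - N * P * A := by rw [hSeq]; noncomm_ring
    have e2 : (N * A * P).trace = (A * P * N).trace := by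
      rw [Matrix.mul_assoc, Matrix.trace_mul_comm, Matrix.mul_assoc]
    rw [e1]
    simp [Matrix.trace_sub, Matrix.trace_neg, e2, k1, k2, Matrix.trace_neg,
      Matrix.trace_mul_comm P A]
    ring
  -- trace (N * S) ≥ 0
  have hNSpsd : 0 ≤ (N * S).trace := by
    have hB : (CFC.sqrt S) * (CFC.sqrt S) = S := CFC.sqrt_mul_sqrt_self S hSpsd.nonneg
    have hBH : (CFC.sqrt S).conjTranspose = (CFC.sqrt S) := (CFC.sqrt_nonneg S).posSemidef.isHermitian
    have hpsd : ((CFC.sqrt S) * N * (CFC.sqrt S)).PosSemidef := by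
      have := hN.posSemidef.mul_mul_conjTranspose_same (CFC.sqrt S)
      rwa [hBH] at this
    have htr : ((CFC.sqrt S) * N * (CFC.sqrt S)).trace = (N * S).trace := by
      rw [Matrix.trace_mul_comm, ← Matrix.mul_assoc, hB, Matrix.trace_mul_comm]
    rw [← htr]
    exact aux_trace_nonneg hpsd
  have htrS0 : S.trace = 0 := by
    have h1 : 0 ≤ S.trace := aux_trace_nonneg hSpsd
    have h2 : (N * S).trace = -S.trace := by rw [htrNS, htrS]; ring
    linarith [hNSpsd, h1, h2.symm.le, h2.le]
  have hS0 : S = 0 := aux_eq_zero_of_trace_eq_zero hSpsd htrS0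
  -- From A P A = 0 deduce P A = 0 and A P = 0
  have hQ : P.conjTranspose * P = P * P := by rw [hPsym]
  have hPA : P * A = 0 := by
    have hsq : (CFC.sqrt P) * (CFC.sqrt P) = P := CFC.sqrt_mul_sqrt_self P hP.nonneg
    have hsqH : (CFC.sqrt P).conjTranspose = (CFC.sqrt P) := (CFC.sqrt_nonneg P).posSemidef.isHermitian
    have hz : ((CFC.sqrt P) * A).conjTranspose * ((CFC.sqrt P) * A) = 0 := by
      rw [Matrix.conjTranspose_mul, hAsym, hsqH]
      calc A * (CFC.sqrt P) * ((CFC.sqrt P) * A) = A * ((CFC.sqrt P) * (CFC.sqrt P)) * A := by noncomm_ring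
        _ = S := by rw [hsq, hS]
        _ = 0 := hS0
    have : (CFC.sqrt P) * A = 0 := Matrix.conjTranspose_mul_self_eq_zero.mp hz
    calc P * A = (CFC.sqrt P) * ((CFC.sqrt P) * A) := by rw [← Matrix.mul_assoc, hsq]
      _ = 0 := by rw [this, Matrix.mul_zero]
  have hNP : N * P = P := by
    have hAP : A * P = 0 := by
      have := congrArg Matrix.conjTranspose hPA
      rwa [Matrix.conjTranspose_mul, hAsym, hPsym, Matrix.conjTranspose_zero] at this
    have : (N - 1) * P = 0 := by rw [← hA]; exact hAP
    have h2 : N * P - P = 0 := by rw [← this]; noncomm_ring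
    linear_combination (norm := noncomm_ring) h2
  intro w
  rw [Matrix.mulVec_mulVec, hNP]
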